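/- Limit of the hierarchical shrinkage factor under a single coordinate growing: let $f : (0,\infty) \to [0,\infty)$ be measurable with $0 < \int_0^\infty f < \infty$ and $\int_0^\infty t f(t) dt < \infty$, and let $c > 0$. Define for $k \in \mathbb{N}$ the ratio $\delta_k = \frac{\int_0^\infty t \, [\prod_{j=0}^{k-1}(t + c + j)]^{-1} f(t)\,dt}{\int_0^\infty [\prod_{j=0}^{k-1}(t + c + j)]^{-1} f(t)\,dt}$, and assume $\int_0^\varepsilon f(t)dt > 0$ for every $\varepsilon > 0$. Then $\lim_{k \to \infty} \delta_k = 0$. -/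

import Mathlib

open MeasureTheory Filter
open scoped BigOperators
open Finset


lemma harmonic_shift_tendsto (b : ℝ) (hb : 0 < b) :
    Tendsto (fun k : ℕ => ∑ j ∈ range k, (b + j)⁻¹) atTop atTop := by
  have hdiv : Tendsto (fun k : ℕ => (b+1)⁻¹ * ∑ j ∈ range k, ((j:ℝ)+1)⁻¹) atTop atTop := by
    apply Tendsto.const_mul_atTop (by positivity)
    have := Real.tendsto_sum_range_one_div_nat_succ_atTop
    simpa [one_div] using this
  apply tendsto_atTop_mono _ hdiv
  intro k
  rw [Finset.mul_sum]
  apply Finset.sum_le_sum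
  intro j _
  rw [← mul_inv]
  apply inv_anti₀ (by positivity)
  have : (0:ℝ) ≤ (j:ℝ) := Nat.cast_nonneg j
  nlinarith

lemma prod_ratio_tendsto (a b : ℝ) (ha : 0 < a) (hab : a < b) :
    Tendsto (fun k : ℕ => (∏ j ∈ range k, (a + j)) / (∏ j ∈ range k, (b + j)))
      atTop (nhds 0) := by
  have hb : 0 < b := ha.trans hab
  have hfac : ∀ (j : ℕ), (0:ℝ) < b + j := fun j => by positivity
  have key : ∀ k : ℕ, (∏ j ∈ range k, (a + j)) / (∏ j ∈ range k, (b + j))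
      ≤ Real.exp (-((b - a) * ∑ j ∈ range k, (b + j)⁻¹)) := by
    intro k
    rw [← Finset.prod_div_distrib]
    have : Real.exp (-((b - a) * ∑ j ∈ range k, (b + j)⁻¹))
        = ∏ j ∈ range k, Real.exp (-((b - a) * (b + j)⁻¹)) := by
      rw [← Real.exp_sum]
      congr 1
      rw [Finset.mul_sum]
      simp
    rw [this]
    apply Finset.prod_le_prod
    · intro j _; positivity
    · intro j _
      have h1 : (a + j) / (b + j) = 1 - (b - a) * (b + j)⁻¹ := by
        field_simp
        ring
      rw [h1]
      have := Real.add_one_le_exp (-((b - a) * (b + j)⁻¹))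
      linarith
  have hexp : Tendsto (fun k : ℕ => Real.exp (-((b - a) * ∑ j ∈ range k, (b + j)⁻¹)))
      atTop (nhds 0) := by
    apply Real.tendsto_exp_atBot.comp
    have h1 : Tendsto (fun k : ℕ => (b - a) * ∑ j ∈ range k, (b + j)⁻¹) atTop atTop :=
      Tendsto.const_mul_atTop (by linarith) (harmonic_shift_tendsto b hb)
    exact tendsto_neg_atBot_iff.mpr h1
  have hnonneg : ∀ k : ℕ, 0 ≤ (∏ j ∈ range k, (a + j)) / (∏ j ∈ range k, (b + j)) := by
    intro k
    apply div_nonneg <;> exact le_of_lt (Finset.prod_pos fun j _ => by positivity)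
  exact squeeze_zero hnonneg key hexp

lemma wprod_pos (c : ℝ) (hc : 0 < c) (t : ℝ) (ht : 0 ≤ t) (k : ℕ) :
    0 < ∏ j ∈ range k, (t + c + j) :=
  Finset.prod_pos fun j _ => by positivity

lemma wprod_mono (c : ℝ) (hc : 0 < c) (s t : ℝ) (hs : 0 ≤ s) (hst : s ≤ t) (k : ℕ) :
    ∏ j ∈ range k, (s + c + j) ≤ ∏ j ∈ range k, (t + c + j) :=
  Finset.prod_le_prod (fun j _ => by positivity) (fun j _ => by linarith)


/-- The shrinkage factor tends to zero as one coordinate grows. -/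
theorem shrinkage_factor_tendsto_zero (f : ℝ → ℝ) (c : ℝ) (hc : 0 < c)
    (hmeas : Measurable f) (hpos : ∀ t, 0 ≤ f t)
    (hint : IntegrableOn f (Set.Ioi 0))
    (hintpos : 0 < ∫ t in Set.Ioi (0 : ℝ), f t)
    (hint1 : IntegrableOn (fun t => t * f t) (Set.Ioi 0))
    (hnear : ∀ ε : ℝ, 0 < ε → 0 < ∫ t in Set.Ioo (0 : ℝ) ε, f t) :
    Tendsto
      (fun k : ℕ =>
        (∫ t in Set.Ioi (0 : ℝ),
            t * (∏ j ∈ Finset.range k, (t + c + j))⁻¹ * f t) /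
          (∫ t in Set.Ioi (0 : ℝ),
            (∏ j ∈ Finset.range k, (t + c + j))⁻¹ * f t))
      atTop (nhds 0) := by
  set w : ℕ → ℝ → ℝ := fun k t => (∏ j ∈ range k, (t + c + j))⁻¹ with hw
  -- measurability of w
  have hwmeas : ∀ k, Measurable (w k) := by
    intro k
    apply Measurable.inv
    exact Finset.measurable_prod _ (fun j _ => by fun_prop)
  have hwpos : ∀ k t, 0 ≤ t → 0 < w k t := fun k t ht =>
    inv_pos.mpr (wprod_pos c hc t ht k)
  have hwanti : ∀ k s t, 0 ≤ s → s ≤ t → w k t ≤ w k s := fun k s t hs hst =>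
    inv_anti₀ (wprod_pos c hc s hs k) (wprod_mono c hc s t hs hst k)
  -- integrability
  have hIg : ∀ k, IntegrableOn (fun t => w k t * f t) (Set.Ioi 0) := by
    intro k
    apply Integrable.mono' (hint.const_mul (w k 0))
    · exact ((hwmeas k).mul hmeas).aestronglyMeasurable
    · filter_upwards [ae_restrict_mem measurableSet_Ioi] with t ht
      rw [Real.norm_eq_abs, abs_of_nonneg (mul_nonneg (hwpos k t (le_of_lt ht)).le (hpos t))]
      exact mul_le_mul_of_nonneg_right (hwanti k 0 t le_rfl ht.le) (hpos t)
  have hIg1 : ∀ k, IntegrableOn (fun t => t * w k t * f t) (Set.Ioi 0) := by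
    intro k
    apply Integrable.mono' (hint1.const_mul (w k 0))
    · exact ((measurable_id.mul (hwmeas k)).mul hmeas).aestronglyMeasurable
    · filter_upwards [ae_restrict_mem measurableSet_Ioi] with t ht
      rw [Real.norm_eq_abs, abs_of_nonneg (mul_nonneg (mul_nonneg ht.le
        (hwpos k t ht.le).le) (hpos t))]
      calc t * w k t * f t ≤ t * w k 0 * f t := by
            apply mul_le_mul_of_nonneg_right _ (hpos t)
            exact mul_le_mul_of_nonneg_left (hwanti k 0 t le_rfl ht.le) ht.le
        _ = w k 0 * (t * f t) := by ring
  -- denominator lower bound for any s > 0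
  have hD_lb : ∀ k (s : ℝ), 0 < s →
      w k s * ∫ t in Set.Ioo (0:ℝ) s, f t ≤ ∫ t in Set.Ioi (0:ℝ), w k t * f t := by
    intro k s hs
    have hsub : Set.Ioo (0:ℝ) s ⊆ Set.Ioi 0 := Set.Ioo_subset_Ioi_self
    calc w k s * ∫ t in Set.Ioo (0:ℝ) s, f t
        = ∫ t in Set.Ioo (0:ℝ) s, w k s * f t := by rw [integral_const_mul]
      _ ≤ ∫ t in Set.Ioo (0:ℝ) s, w k t * f t := by
          apply setIntegral_mono_on ((hint.mono_set hsub).const_mul _)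
            ((hIg k).mono_set hsub) measurableSet_Ioo
          intro t ht
          exact mul_le_mul_of_nonneg_right (hwanti k t s ht.1.le ht.2.le) (hpos t)
      _ ≤ ∫ t in Set.Ioi (0:ℝ), w k t * f t := by
          apply setIntegral_mono_set (hIg k)
          · filter_upwards [ae_restrict_mem measurableSet_Ioi] with t ht
            exact mul_nonneg (hwpos k t ht.le).le (hpos t)
          · exact HasSubset.Subset.eventuallyLE hsub
  have hDpos : ∀ k, 0 < ∫ t in Set.Ioi (0:ℝ), w k t * f t := by
    intro k
    have := hD_lb k 1 one_pos
    have h1 := hnear 1 one_pos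
    nlinarith [hwpos k 1 zero_le_one]
  have hNnonneg : ∀ k, 0 ≤ ∫ t in Set.Ioi (0:ℝ), t * w k t * f t := by
    intro k
    apply setIntegral_nonneg measurableSet_Ioi
    intro t ht
    exact mul_nonneg (mul_nonneg (le_of_lt ht) (hwpos k t (le_of_lt ht)).le) (hpos t)
  -- main argument
  apply NormedAddCommGroup.tendsto_nhds_zero.mpr
  intro ε hε
  set s : ℝ := ε / 2 with hs_def
  have hs : 0 < s := by positivity
  set A : ℝ := ∫ t in Set.Ioo (0:ℝ) (s/2), f t with hA_def
  have hA : 0 < A := hnear _ (by positivity)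
  set M : ℝ := ∫ t in Set.Ioi (0:ℝ), t * f t with hM_def
  have hM : 0 ≤ M := setIntegral_nonneg measurableSet_Ioi
    (fun t ht => mul_nonneg (le_of_lt ht) (hpos t))
  set P : ℕ → ℝ := fun k =>
    (∏ j ∈ range k, (s/2 + c + j)) / (∏ j ∈ range k, (s + c + j)) with hP_def
  have hP : Tendsto P atTop (nhds 0) := by
    have := prod_ratio_tendsto (s/2 + c) (s + c) (by positivity) (by linarith)
    apply this.congr
    intro k
    congr 1 <;> exact Finset.prod_congr rfl (fun j _ => by ring)
  have hPM : Tendsto (fun k => P k * (M / A)) atTop (nhds 0) := by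
    simpa using hP.mul_const (M / A)
  filter_upwards [hPM.eventually_lt_const (by positivity : (0:ℝ) < ε/2)] with k hk
  set D : ℝ := ∫ t in Set.Ioi (0:ℝ), w k t * f t with hD_def
  set N : ℝ := ∫ t in Set.Ioi (0:ℝ), t * w k t * f t with hN_def
  rw [Real.norm_eq_abs, abs_of_nonneg (div_nonneg (hNnonneg k) (hDpos k).le)]
  -- split N
  have hsub1 : Set.Ioo (0:ℝ) s ⊆ Set.Ioi 0 := Set.Ioo_subset_Ioi_self
  have hsub2 : Set.Ici s ⊆ Set.Ioi (0:ℝ) := Set.Ici_subset_Ioi.mpr hs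
  have hunion : Set.Ioo (0:ℝ) s ∪ Set.Ici s = Set.Ioi 0 := Set.Ioo_union_Ici_eq_Ioi hs
  have hdisj : Disjoint (Set.Ioo (0:ℝ) s) (Set.Ici s) := by
    apply Set.disjoint_left.mpr
    intro t ht hts
    exact absurd ht.2 (not_lt.mpr hts)
  have hsplit : N = (∫ t in Set.Ioo (0:ℝ) s, t * w k t * f t)
      + ∫ t in Set.Ici s, t * w k t * f t := by
    rw [hN_def, ← hunion, setIntegral_union hdisj measurableSet_Ici
      ((hIg1 k).mono_set (hunion ▸ hsub1)) ((hIg1 k).mono_set (hunion ▸ hsub2))]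
  have hpiece1 : (∫ t in Set.Ioo (0:ℝ) s, t * w k t * f t) ≤ s * D := by
    calc (∫ t in Set.Ioo (0:ℝ) s, t * w k t * f t)
        ≤ ∫ t in Set.Ioo (0:ℝ) s, s * (w k t * f t) := by
          apply setIntegral_mono_on ((hIg1 k).mono_set hsub1)
            (((hIg k).mono_set hsub1).const_mul _) measurableSet_Ioo
          intro t ht
          rw [mul_assoc]
          exact mul_le_mul_of_nonneg_right ht.2.le
            (mul_nonneg (hwpos k t ht.1.le).le (hpos t))
      _ = s * ∫ t in Set.Ioo (0:ℝ) s, w k t * f t := integral_const_mul _ _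
      _ ≤ s * D := by
          apply mul_le_mul_of_nonneg_left _ hs.le
          apply setIntegral_mono_set (hIg k)
          · filter_upwards [ae_restrict_mem measurableSet_Ioi] with t ht
            exact mul_nonneg (hwpos k t ht.le).le (hpos t)
          · exact HasSubset.Subset.eventuallyLE hsub1
  have hpiece2 : (∫ t in Set.Ici s, t * w k t * f t) ≤ w k s * M := by
    calc (∫ t in Set.Ici s, t * w k t * f t)
        ≤ ∫ t in Set.Ici s, w k s * (t * f t) := by
          apply setIntegral_mono_on ((hIg1 k).mono_set hsub2)
            ((hint1.mono_set hsub2).const_mul _) measurableSet_Ici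
          intro t ht
          have ht0 : 0 < t := lt_of_lt_of_le hs ht
          calc t * w k t * f t ≤ t * w k s * f t := by
                apply mul_le_mul_of_nonneg_right _ (hpos t)
                exact mul_le_mul_of_nonneg_left (hwanti k s t hs.le ht) ht0.le
            _ = w k s * (t * f t) := by ring
      _ = w k s * ∫ t in Set.Ici s, t * f t := integral_const_mul _ _
      _ ≤ w k s * M := by
          apply mul_le_mul_of_nonneg_left _ (hwpos k s hs.le).le
          apply setIntegral_mono_set hint1
          · filter_upwards [ae_restrict_mem measurableSet_Ioi] with t ht
            exact mul_nonneg ht.le (hpos t)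
          · exact HasSubset.Subset.eventuallyLE hsub2
  have hN_le : N ≤ s * D + w k s * M := by rw [hsplit]; linarith
  have hDlow : w k (s/2) * A ≤ D := hD_lb k (s/2) (by positivity)
  have hDpos' : 0 < D := hDpos k
  have hstep1 : N / D ≤ s + w k s * M / D := by
    rw [div_le_iff₀ hDpos']
    have h1 : w k s * M / D * D = w k s * M := div_mul_cancel₀ _ hDpos'.ne'
    nlinarith
  have hstep2 : w k s * M / D ≤ w k s * M / (w k (s/2) * A) := by
    apply div_le_div_of_nonneg_left (mul_nonneg (hwpos k s hs.le).le hM) _ hDlow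
    exact mul_pos (hwpos k (s/2) (by positivity)) hA
  have hPa := wprod_pos c hc (s/2) (by positivity) k
  have hPb := wprod_pos c hc s hs.le k
  have heq : w k s * M / (w k (s/2) * A) = P k * (M / A) := by
    simp only [hw, hP_def]
    field_simp
  have : N / D < ε := by
    have := hstep1.trans (by linarith [hstep2, heq ▸ hstep2] : s + w k s * M / D ≤ s + P k * (M/A))
    linarith [hk]
  exact this
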